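/- arXiv:1009.3531 — 2 statements merged into one kernel-verified Lean document; each statement's English description precedes it below -/
import Mathlib

section
/- Let (R, 𝔪) be a commutative Noetherian local ring, 𝔞 and 𝔟 ideals of R, and 𝔭₁, …, 𝔭ₙ prime ideals of R such that 𝔞𝔟 ⊄ 𝔭ⱼ for all j ≤ n. Let x be an element of 𝔞𝔟 with x ∉ 𝔭ⱼ for all j ≤ n. Then there exist elements a₁, …, a_r ∈ 𝔞 and b₁, …, b_r ∈ 𝔟 such that x = a₁b₁ + ⋯ + a_r b_r, and such that for all i ≤ r and all j ≤ n, one has aᵢbᵢ ∉ 𝔭ⱼ and a₁b₁ + ⋯ + aᵢbᵢ ∉ 𝔭ⱼ. -/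
open Finset

private lemma coset_avoid {R : Type} [CommRing R] (F : Finset (R × R)) (Q : Finset (Ideal R)) :
    (∀ q ∈ Q, q.IsPrime) → (∀ q ∈ Q, Infinite (R ⧸ q)) →
    (∀ q ∈ Q, ∀ z ∈ F, z.1 ∉ q) →
    ∃ t : R, ∀ q ∈ Q, ∀ z ∈ F, z.1 * t + z.2 ∉ q := by
  classical
  induction Q using Finset.strongInduction with
  | _ Q ih =>
    intro hp hi hF
    rcases Q.eq_empty_or_nonempty with rfl | hne
    · exact ⟨0, by simp⟩
    obtain ⟨q₁, hq₁Q, hmin⟩ := Q.exists_minimal hne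
    have hq₁p : q₁.IsPrime := hp q₁ hq₁Q
    obtain ⟨t₀, ht₀⟩ := ih (Q.erase q₁) (Finset.erase_ssubset hq₁Q)
      (fun q hq => hp q (Finset.mem_of_mem_erase hq))
      (fun q hq => hi q (Finset.mem_of_mem_erase hq))
      (fun q hq => hF q (Finset.mem_of_mem_erase hq))
    have he : ∃ e, e ∈ (Q.erase q₁).inf id ∧ e ∉ q₁ := by
      by_contra hcon
      push_neg at hcon
      have hle : (Q.erase q₁).inf id ≤ q₁ := fun e hemem => hcon e hemem
      rw [Ideal.IsPrime.inf_le' hq₁p] at hle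
      obtain ⟨q, hqQ, hqle⟩ := hle
      exact Finset.ne_of_mem_erase hqQ
        (le_antisymm hqle (hmin (Finset.mem_of_mem_erase hqQ) hqle))
    obtain ⟨e, heInf, heq₁⟩ := he
    haveI := hq₁p
    haveI : Infinite (R ⧸ q₁) := hi q₁ hq₁Q
    set π := Ideal.Quotient.mk q₁ with hπ
    have hπe : π e ≠ 0 := fun h => heq₁ (Ideal.Quotient.eq_zero_iff_mem.1 h)
    set g : R × R → R ⧸ q₁ := fun w =>
      if h : ∃ z : R ⧸ q₁, π w.1 * π t₀ + π w.1 * π e * z + π w.2 = 0 then h.choose else 0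
      with hg
    obtain ⟨z₀, hz₀⟩ := Infinite.exists_notMem_finset (F.image g)
    obtain ⟨lam, hlam⟩ := Ideal.Quotient.mk_surjective z₀
    refine ⟨t₀ + lam * e, ?_⟩
    intro q hqQ w hw hmem
    by_cases hqq : q = q₁
    · subst hqq
      have hw1 : π w.1 ≠ 0 := fun h => hF q hqQ w hw (Ideal.Quotient.eq_zero_iff_mem.1 h)
      have h0 : π w.1 * π t₀ + π w.1 * π e * π lam + π w.2 = 0 := by
        have h1 : π (w.1 * (t₀ + lam * e) + w.2) = 0 := Ideal.Quotient.eq_zero_iff_mem.2 hmem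
        calc π w.1 * π t₀ + π w.1 * π e * π lam + π w.2
            = π (w.1 * (t₀ + lam * e) + w.2) := by
              rw [map_add, map_mul, map_add, map_mul]; ring
          _ = 0 := h1
      have hex : ∃ z : R ⧸ q, π w.1 * π t₀ + π w.1 * π e * z + π w.2 = 0 := ⟨π lam, h0⟩
      have huniq : hex.choose = π lam := by
        have h2 := hex.choose_spec
        have h3 : π w.1 * π e * (hex.choose - π lam) = 0 := by linear_combination h2 - h0
        rcases mul_eq_zero.1 h3 with h4 | h4
        · exact absurd h4 (mul_ne_zero hw1 hπe)
        · exact sub_eq_zero.1 h4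
      have hgw : g w = π lam := by rw [hg]; simp only; rw [dif_pos hex]; exact huniq
      exact hz₀ (by rw [← hlam, ← hgw]; exact Finset.mem_image_of_mem g hw)
    · have hqQ' : q ∈ Q.erase q₁ := Finset.mem_erase.2 ⟨hqq, hqQ⟩
      have heq : e ∈ q := Submodule.mem_finsetInf.1 heInf q hqQ'
      apply ht₀ q hqQ' w hw
      have hdecomp : w.1 * t₀ + w.2 = (w.1 * (t₀ + lam * e) + w.2) - w.1 * lam * e := by ring
      rw [hdecomp]
      exact Submodule.sub_mem _ hmem (Ideal.mul_mem_left _ _ heq)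

private lemma sum_range_two_mul {R : Type} [CommRing R] (f : ℕ → R) (m : ℕ) :
    ∑ i ∈ Finset.range (2*m), f i = ∑ i ∈ Finset.range m, (f (2*i) + f (2*i+1)) := by
  induction m with
  | zero => simp
  | succ m ih =>
    have h : 2*(m+1) = (2*m+1)+1 := by ring
    rw [h, Finset.sum_range_succ, Finset.sum_range_succ, ih, Finset.sum_range_succ]
    ring

private lemma sum_append {R : Type} [CommRing R] (f g : ℕ → R) (m n : ℕ) :
    ∑ i ∈ Finset.range (m+n), (if i < m then f i else g (i-m)) =
      (∑ i ∈ Finset.range m, f i) + ∑ i ∈ Finset.range n, g i := by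
  induction n with
  | zero =>
    simp only [Nat.add_zero, Finset.sum_range_zero, add_zero]
    exact Finset.sum_congr rfl fun i hi => if_pos (Finset.mem_range.1 hi)
  | succ n ih =>
    have h : m + (n+1) = (m+n)+1 := by ring
    rw [h, Finset.sum_range_succ, ih, Finset.sum_range_succ]
    rw [if_neg (by omega : ¬ (m+n < m)), show m + n - m = n by omega, add_assoc]

private lemma exists_rep {R : Type} [CommRing R] (𝔞 𝔟 : Ideal R) (x : R) (hx : x ∈ 𝔞 * 𝔟) :
    ∃ (m : ℕ) (a b : ℕ → R), 0 < m ∧ (∀ i < m, a i ∈ 𝔞) ∧ (∀ i < m, b i ∈ 𝔟) ∧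
      x = ∑ i ∈ Finset.range m, a i * b i := by
  refine Submodule.mul_induction_on hx ?_ ?_
  · intro a ha b hb
    exact ⟨1, fun _ => a, fun _ => b, one_pos, fun i _ => ha, fun i _ => hb, by simp⟩
  · rintro y z ⟨m1, a1, b1, hm1, ha1, hb1, hy⟩ ⟨m2, a2, b2, hm2, ha2, hb2, hz⟩
    refine ⟨m1 + m2, fun i => if i < m1 then a1 i else a2 (i - m1),
      fun i => if i < m1 then b1 i else b2 (i - m1), by omega, ?_, ?_, ?_⟩
    · intro i hi
      by_cases h : i < m1
      · simpa [h] using ha1 i h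
      · simpa [h] using ha2 (i - m1) (by omega)
    · intro i hi
      by_cases h : i < m1
      · simpa [h] using hb1 i h
      · simpa [h] using hb2 (i - m1) (by omega)
    · rw [hy, hz, ← sum_append (fun i => a1 i * b1 i) (fun i => a2 i * b2 i) m1 m2]
      refine Finset.sum_congr rfl fun i hi => ?_
      by_cases h : i < m1 <;> simp [h]

/-- **Lemma 2.1.** In a Noetherian local ring, an element `x ∈ 𝔞𝔟` avoiding finitely many
primes `𝔭ⱼ` (none of which contains `𝔞𝔟`) can be written as `x = a₁b₁ + ⋯ + aᵣbᵣ` with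
`aᵢ ∈ 𝔞`, `bᵢ ∈ 𝔟`, such that each `aᵢbᵢ` and each partial sum `a₁b₁ + ⋯ + aᵢbᵢ`
avoids all the primes `𝔭ⱼ`. -/
theorem exists_sum_products_notMem_primes
    {R : Type} [CommRing R] [IsNoetherianRing R] [IsLocalRing R]
    (𝔞 𝔟 : Ideal R) (n : ℕ) (p : ℕ → Ideal R)
    (hp : ∀ j < n, (p j).IsPrime)
    (hnle : ∀ j < n, ¬ 𝔞 * 𝔟 ≤ p j)
    (x : R) (hx : x ∈ 𝔞 * 𝔟) (hxp : ∀ j < n, x ∉ p j) :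
    ∃ (r : ℕ) (a b : ℕ → R), 0 < r ∧
      (∀ i < r, a i ∈ 𝔞) ∧ (∀ i < r, b i ∈ 𝔟) ∧
      x = ∑ i ∈ Finset.range r, a i * b i ∧
      (∀ i < r, ∀ j < n, a i * b i ∉ p j) ∧
      (∀ i < r, ∀ j < n, (∑ k ∈ Finset.range (i + 1), a k * b k) ∉ p j) := by
  classical
  by_cases hxm : x ∈ IsLocalRing.maximalIdeal R
  case neg =>
    -- x is a unit
    have hu : IsUnit x := by
      by_contra hnu
      exact hxm ((IsLocalRing.mem_maximalIdeal x).2 hnu)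
    have hxa : x ∈ 𝔞 := Ideal.mul_le_left hx
    have hxb : x ∈ 𝔟 := Ideal.mul_le_right hx
    have hbtop : (1:R) ∈ 𝔟 := by
      rw [Ideal.eq_top_of_isUnit_mem 𝔟 hxb hu]; trivial
    refine ⟨1, fun _ => x, fun _ => 1, one_pos, fun i _ => hxa, fun i _ => hbtop, by simp,
      ?_, ?_⟩
    · intro i _ j hj; simpa using hxp j hj
    · intro i hi j hj
      interval_cases i
      simpa using hxp j hj
  case pos =>
    -- every p j has infinite quotient
    have hInf : ∀ j < n, Infinite (R ⧸ p j) := by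
      intro j hj
      by_contra hfin
      rw [not_infinite_iff_finite] at hfin
      haveI := hfin
      haveI := hp j hj
      have hfield : IsField (R ⧸ p j) := Finite.isField_of_domain _
      have hmax : (p j).IsMaximal := Ideal.Quotient.maximal_of_isField _ hfield
      have heq : p j = IsLocalRing.maximalIdeal R := IsLocalRing.eq_maximalIdeal hmax
      exact hxp j hj (heq ▸ hxm)
    -- Q
    set Q : Finset (Ideal R) := (Finset.range n).image p with hQdef
    have hQ : ∀ j < n, p j ∈ Q := fun j hj =>
      Finset.mem_image_of_mem p (Finset.mem_range.2 hj)
    have hQp : ∀ q ∈ Q, q.IsPrime := by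
      intro q hq
      obtain ⟨j, hj, rfl⟩ := Finset.mem_image.1 hq
      exact hp j (Finset.mem_range.1 hj)
    have hQi : ∀ q ∈ Q, Infinite (R ⧸ q) := by
      intro q hq
      obtain ⟨j, hj, rfl⟩ := Finset.mem_image.1 hq
      exact hInf j (Finset.mem_range.1 hj)
    -- choose c ∈ 𝔞 avoiding all primes
    have hc : ∃ c ∈ 𝔞, ∀ j < n, c ∉ p j := by
      by_contra h
      push_neg at h
      have hsub : (𝔞 : Set R) ⊆ ⋃ j ∈ (Finset.range n : Set ℕ), (p j : Set R) := by
        intro c hcm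
        obtain ⟨j, hj, hcj⟩ := h c hcm
        exact Set.mem_biUnion (by simpa using hj) hcj
      rw [Ideal.subset_union_prime n n (fun j hj _ _ => hp j (by simpa using hj))] at hsub
      obtain ⟨j, hj, hle⟩ := hsub
      exact hnle j (by simpa using hj) (le_trans Ideal.mul_le_left hle)
    have hd : ∃ d ∈ 𝔟, ∀ j < n, d ∉ p j := by
      by_contra h
      push_neg at h
      have hsub : (𝔟 : Set R) ⊆ ⋃ j ∈ (Finset.range n : Set ℕ), (p j : Set R) := by
        intro c hcm
        obtain ⟨j, hj, hcj⟩ := h c hcm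
        exact Set.mem_biUnion (by simpa using hj) hcj
      rw [Ideal.subset_union_prime n n (fun j hj _ _ => hp j (by simpa using hj))] at hsub
      obtain ⟨j, hj, hle⟩ := hsub
      exact hnle j (by simpa using hj) (le_trans Ideal.mul_le_right hle)
    obtain ⟨c, hcA, hcp⟩ := hc
    obtain ⟨d, hdB, hdp⟩ := hd
    obtain ⟨m, a, b, hm, haA, hbB, hrep⟩ := exists_rep 𝔞 𝔟 x hx
    -- choose t with c*t + a i ∉ p j
    obtain ⟨t, ht⟩ := coset_avoid ((Finset.range m).image fun i => (c, a i)) Q hQp hQi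
      (by
        intro q hq z hz
        obtain ⟨i, hi, rfl⟩ := Finset.mem_image.1 hz
        obtain ⟨j, hj, rfl⟩ := Finset.mem_image.1 hq
        exact hcp j (Finset.mem_range.1 hj))
    have ht' : ∀ i < m, ∀ j < n, c * t + a i ∉ p j := by
      intro i hi j hj
      exact ht (p j) (hQ j hj) (c, a i)
        (Finset.mem_image_of_mem _ (Finset.mem_range.2 hi))
    -- the preprocessed representation with all left factors avoiding the primes
    set M := 2*m with hM
    set α : ℕ → R := fun i => if i % 2 = 0 then c*t + a (i/2) else c with hα
    set β : ℕ → R := fun i => if i % 2 = 0 then b (i/2) else -(t * b (i/2)) with hβ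
    have hM0 : 0 < M := by omega
    have hαA : ∀ i < M, α i ∈ 𝔞 := by
      intro i hi
      simp only [hα]
      by_cases h : i % 2 = 0
      · rw [if_pos h]
        exact add_mem (Ideal.mul_mem_right t 𝔞 hcA) (haA (i/2) (by omega))
      · rw [if_neg h]; exact hcA
    have hβB : ∀ i < M, β i ∈ 𝔟 := by
      intro i hi
      simp only [hβ]
      by_cases h : i % 2 = 0
      · rw [if_pos h]; exact hbB (i/2) (by omega)
      · rw [if_neg h]; exact neg_mem (Ideal.mul_mem_left 𝔟 t (hbB (i/2) (by omega)))
    have hαp : ∀ i < M, ∀ j < n, α i ∉ p j := by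
      intro i hi j hj
      simp only [hα]
      by_cases h : i % 2 = 0
      · rw [if_pos h]; exact ht' (i/2) (by omega) j hj
      · rw [if_neg h]; exact hcp j hj
    have hsum : x = ∑ i ∈ Finset.range M, α i * β i := by
      rw [hM, sum_range_two_mul, hrep]
      refine Finset.sum_congr rfl fun i hi => ?_
      simp only [hα, hβ]
      have e1 : (2*i) % 2 = 0 := by omega
      have e2 : (2*i)/2 = i := by omega
      have e3 : ¬((2*i+1) % 2 = 0) := by omega
      have e4 : (2*i+1)/2 = i := by omega
      rw [if_pos e1, if_pos e1, if_neg e3, if_neg e3, e2, e4]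
      ring
    have hα0d : ∀ j < n, α 0 * d ∉ p j := by
      intro j hj hmem
      rcases (hp j hj).mem_or_mem hmem with h | h
      · exact hαp 0 hM0 j hj h
      · exact hdp j hj h
    have hαkd : ∀ k < M, ∀ j < n, α k * d ∉ p j := by
      intro k hk j hj hmem
      rcases (hp j hj).mem_or_mem hmem with h | h
      · exact hαp k hk j hj h
      · exact hdp j hj h
    -- choose s
    obtain ⟨s, hs⟩ := coset_avoid
      (insert (α 0 * d, (0:R))
        ((Finset.range (M+1)).image fun k => (α 0 * d, ∑ i ∈ Finset.range k, α i * β i)))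
      Q hQp hQi
      (by
        intro q hq z hz
        obtain ⟨j, hj, rfl⟩ := Finset.mem_image.1 hq
        have hj' := Finset.mem_range.1 hj
        rcases Finset.mem_insert.1 hz with rfl | hz'
        · exact hα0d j hj'
        · obtain ⟨k, hk, rfl⟩ := Finset.mem_image.1 hz'
          exact hα0d j hj')
    have hs0 : ∀ j < n, (α 0 * d) * s + 0 ∉ p j := fun j hj =>
      hs (p j) (hQ j hj) _ (Finset.mem_insert_self _ _)
    have hsτ : ∀ k ≤ M, ∀ j < n,
        (α 0 * d) * s + (∑ i ∈ Finset.range k, α i * β i) ∉ p j := fun k hk j hj =>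
      hs (p j) (hQ j hj) _ (Finset.mem_insert_of_mem
        (Finset.mem_image_of_mem _ (Finset.mem_range.2 (by omega))))
    -- choose u
    obtain ⟨u, hu⟩ := coset_avoid
      ((((Finset.range M).image fun k => (-(α k * d), α k * β k)) ∪
        ((Finset.range M).image fun k => (α k * d, (0:R)))) ∪
        ((Finset.range M).image fun k =>
          (-(α k * d), (∑ i ∈ Finset.range k, α i * β i) + α k * β k + (α 0 * d) * s)))
      Q hQp hQi
      (by
        intro q hq z hz
        obtain ⟨j, hj, rfl⟩ := Finset.mem_image.1 hq
        have hj' := Finset.mem_range.1 hj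
        rcases Finset.mem_union.1 hz with hz' | hz'
        · rcases Finset.mem_union.1 hz' with hz'' | hz''
          · obtain ⟨k, hk, rfl⟩ := Finset.mem_image.1 hz''
            intro hmem
            exact hαkd k (Finset.mem_range.1 hk) j hj' ((Submodule.neg_mem_iff _).1 hmem)
          · obtain ⟨k, hk, rfl⟩ := Finset.mem_image.1 hz''
            exact hαkd k (Finset.mem_range.1 hk) j hj'
        · obtain ⟨k, hk, rfl⟩ := Finset.mem_image.1 hz'
          intro hmem
          exact hαkd k (Finset.mem_range.1 hk) j hj' ((Submodule.neg_mem_iff _).1 hmem))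
    have hu1 : ∀ k < M, ∀ j < n, (-(α k * d)) * u + α k * β k ∉ p j := fun k hk j hj =>
      hu (p j) (hQ j hj) _ (Finset.mem_union_left _ (Finset.mem_union_left _
        (Finset.mem_image_of_mem _ (Finset.mem_range.2 hk))))
    have hu2 : ∀ k < M, ∀ j < n, (α k * d) * u + 0 ∉ p j := fun k hk j hj =>
      hu (p j) (hQ j hj) _ (Finset.mem_union_left _ (Finset.mem_union_right _
        (Finset.mem_image_of_mem _ (Finset.mem_range.2 hk))))
    have hu3 : ∀ k < M, ∀ j < n,
        (-(α k * d)) * u + ((∑ i ∈ Finset.range k, α i * β i) + α k * β k + (α 0 * d) * s)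
          ∉ p j := fun k hk j hj =>
      hu (p j) (hQ j hj) _ (Finset.mem_union_right _
        (Finset.mem_image_of_mem _ (Finset.mem_range.2 hk)))
    -- the final arrays
    set A : ℕ → R := fun i => if i = 0 then s * α 0 else if i = 2*M+1 then -(s * α 0)
      else if i % 2 = 1 then α ((i-1)/2) else u * α (i/2 - 1) with hA
    set B : ℕ → R := fun i => if i = 0 then d else if i = 2*M+1 then d
      else if i % 2 = 1 then β ((i-1)/2) - u*d else d with hB
    have hv0 : A 0 * B 0 = (α 0 * d) * s + 0 := by
      simp only [hA, hB, if_pos rfl]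
      ring
    have hvodd : ∀ k < M, A (2*k+1) * B (2*k+1) = α k * (β k - u * d) := by
      intro k hk
      have h1 : ¬(2*k+1 = 0) := by omega
      have h2 : ¬(2*k+1 = 2*M+1) := by omega
      have h3 : (2*k+1) % 2 = 1 := by omega
      have h4 : (2*k+1-1)/2 = k := by omega
      simp only [hA, hB]
      rw [if_neg h1, if_neg h2, if_pos h3, if_neg h1, if_neg h2, if_pos h3, h4]
    have hvev : ∀ k < M, A (2*k+2) * B (2*k+2) = (α k * d) * u + 0 := by
      intro k hk
      have h1 : ¬(2*k+2 = 0) := by omega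
      have h2 : ¬(2*k+2 = 2*M+1) := by omega
      have h3 : ¬((2*k+2) % 2 = 1) := by omega
      have h4 : (2*k+2)/2 - 1 = k := by omega
      simp only [hA, hB]
      rw [if_neg h1, if_neg h2, if_neg h3, if_neg h1, if_neg h2, if_neg h3, h4]
      ring
    have hvlast : A (2*M+1) * B (2*M+1) = -((α 0 * d) * s + 0) := by
      have h1 : ¬(2*M+1 = 0) := by omega
      simp only [hA, hB]
      split_ifs <;> first | ring1 | omega | contradiction
    have hkey : ∀ k, k ≤ M →
        ∑ i ∈ Finset.range (2*k+1), A i * B i =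
          (∑ i ∈ Finset.range k, α i * β i) + (α 0 * d) * s := by
      intro k
      induction k with
      | zero =>
        intro _
        rw [Finset.sum_range_one, Finset.sum_range_zero, hv0]
        ring
      | succ k ih =>
        intro hk
        have h1 := ih (by omega)
        have e : 2*(k+1)+1 = (2*k+1)+1+1 := by ring
        rw [e, Finset.sum_range_succ, Finset.sum_range_succ, h1,
          Finset.sum_range_succ, hvodd k (by omega),
          show (2*k+1)+1 = 2*k+2 by omega, hvev k (by omega)]
        ring
    have heven : ∀ k < M,
        ∑ i ∈ Finset.range (2*k+2), A i * B i =
          (-(α k * d)) * u + ((∑ i ∈ Finset.range k, α i * β i) + α k * β k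
            + (α 0 * d) * s) := by
      intro k hk
      rw [show 2*k+2 = (2*k+1)+1 by omega, Finset.sum_range_succ, hkey k (le_of_lt hk),
        hvodd k hk]
      ring
    have hfin : ∑ i ∈ Finset.range (2*M+2), A i * B i = x := by
      rw [show 2*M+2 = (2*M+1)+1 by omega, Finset.sum_range_succ, hkey M le_rfl, hvlast,
        ← hsum]
      ring
    refine ⟨2*M+2, A, B, by omega, ?_, ?_, hfin.symm, ?_, ?_⟩
    · intro i hi
      simp only [hA]
      split_ifs with h1 h2 h3
      · exact Ideal.mul_mem_left 𝔞 s (hαA 0 hM0)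
      · exact neg_mem (Ideal.mul_mem_left 𝔞 s (hαA 0 hM0))
      · exact hαA ((i-1)/2) (by omega)
      · exact Ideal.mul_mem_left 𝔞 u (hαA (i/2 - 1) (by omega))
    · intro i hi
      simp only [hB]
      split_ifs with h1 h2 h3
      · exact hdB
      · exact hdB
      · exact sub_mem (hβB ((i-1)/2) (by omega)) (Ideal.mul_mem_left 𝔟 u hdB)
      · exact hdB
    · intro i hi j hj
      by_cases h1 : i = 0
      · subst h1; rw [hv0]; exact hs0 j hj
      by_cases h2 : i = 2*M+1
      · subst h2
        rw [hvlast]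
        intro hmem
        exact hs0 j hj ((Submodule.neg_mem_iff _).1 hmem)
      by_cases h3 : i % 2 = 1
      · rw [show i = 2*((i-1)/2)+1 by omega, hvodd ((i-1)/2) (by omega)]
        intro hmem
        apply hu1 ((i-1)/2) (by omega) j hj
        have heq : (-(α ((i-1)/2) * d)) * u + α ((i-1)/2) * β ((i-1)/2)
            = α ((i-1)/2) * (β ((i-1)/2) - u * d) := by ring
        rwa [heq]
      · rw [show i = 2*(i/2-1)+2 by omega, hvev (i/2-1) (by omega)]
        exact hu2 (i/2-1) (by omega) j hj
    · intro i hi j hj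
      by_cases h1 : i = 2*M+1
      · subst h1
        rw [show 2*M+1+1 = 2*M+2 by omega, hfin]
        exact hxp j hj
      by_cases h2 : i % 2 = 0
      · rw [show i+1 = 2*(i/2)+1 by omega, hkey (i/2) (by omega)]
        intro hmem
        apply hsτ (i/2) (by omega) j hj
        rwa [add_comm] at hmem
      · rw [show i+1 = 2*((i-1)/2)+2 by omega, heven ((i-1)/2) (by omega)]
        exact hu3 ((i-1)/2) (by omega) j hj
end

section
/- Let (R, 𝔪) be a commutative Noetherian local ring, 𝔞 an ideal of R, M a finitely generated R-module, and x ∈ 𝔞² an 𝔞-filter regular element of M. Then there exist 𝔞-filter regular elements a₁, …, a_r, b₁, …, b_r ∈ 𝔞 of M such that x = a₁b₁ + ⋯ + a_r b_r and such that a₁b₁ + ⋯ + aᵢbᵢ is an 𝔞-filter regular element of M for every i ≤ r. -/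
open Pointwise

lemma ass_subset_union {R M : Type*} [CommRing R] [AddCommGroup M] [Module R M]
    (N : Submodule R M) :
    associatedPrimes R M ⊆ associatedPrimes R N ∪ associatedPrimes R (M ⧸ N) := by
  exact associatedPrimes.subset_union_of_exact N.injective_subtype (LinearMap.exact_subtype_mkQ N)

lemma span_singleton_equiv_quot {R M : Type*} [CommRing R] [AddCommGroup M] [Module R M]
    (x : M) : Nonempty ((R ⧸ (Submodule.span R {x}).annihilator) ≃ₗ[R] ↥(Submodule.span R {x})) := by
  have h1 : Submodule.span R {x} = LinearMap.range (LinearMap.toSpanSingleton R M x) :=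
    LinearMap.span_singleton_eq_range R M x
  have h2 : LinearMap.ker (LinearMap.toSpanSingleton R M x)
      = (Submodule.span R {x}).annihilator := by
    ext r
    rw [LinearMap.mem_ker, Submodule.mem_annihilator_span_singleton]
    rfl
  refine ⟨?_⟩
  rw [← h2, h1]
  exact (LinearMap.toSpanSingleton R M x).quotKerEquivRange

theorem associatedPrimes_finite (R M : Type*) [CommRing R] [IsNoetherianRing R]
    [AddCommGroup M] [Module R M] [Module.Finite R M] :
    (associatedPrimes R M).Finite := by
  exact associatedPrimes.finite R M

lemma quot_infinite_of_ne_maximal {R : Type} [CommRing R] [IsLocalRing R]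
    (p : Ideal R) (hp : p.IsPrime) (hne : ¬ p.IsMaximal) : Infinite (R ⧸ p) := by
  by_contra h
  have : Finite (R ⧸ p) := not_infinite_iff_finite.mp h
  exact hne (Ideal.Quotient.maximal_of_isField p (Finite.isField_of_domain _))

lemma finite_quot_of_finiteIndex {R : Type} [CommRing R] (p : Ideal R)
    (h : p.toAddSubgroup.FiniteIndex) : Finite (R ⧸ p) := by
  haveI := h
  have : Finite (R ⧸ p.toAddSubgroup) :=
    AddSubgroup.finite_quotient_of_finiteIndex (H := p.toAddSubgroup)
  exact this

lemma coset_avoidance {R : Type} [CommRing R] (L : List (R × R × Ideal R))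
    (h : ∀ c ∈ L, (c.2.2).IsPrime ∧ Infinite (R ⧸ c.2.2) ∧ c.2.1 ∉ c.2.2) :
    ∃ t : R, ∀ c ∈ L, c.1 + t * c.2.1 ∉ c.2.2 := by
  by_contra hcon
  push_neg at hcon
  classical
  set ι := Fin L.length
  set H : ι → AddSubgroup R := fun i => ((L.get i).2.2).toAddSubgroup with hH
  set g : ι → R := fun i =>
    if hh : ∃ t : R, (L.get i).1 + t * (L.get i).2.1 ∈ (L.get i).2.2 then hh.choose else 0
    with hg
  have hcovers : ⋃ i ∈ (Finset.univ : Finset ι), g i +ᵥ (H i : Set R) = Set.univ := by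
    rw [Set.eq_univ_iff_forall]
    intro t
    obtain ⟨c, hcL, hct⟩ := hcon t
    obtain ⟨i, hi⟩ := List.mem_iff_get.mp hcL
    subst hi
    have hex : ∃ t : R, (L.get i).1 + t * (L.get i).2.1 ∈ (L.get i).2.2 := ⟨t, hct⟩
    have hgi : (L.get i).1 + g i * (L.get i).2.1 ∈ (L.get i).2.2 := by
      rw [hg]; simp only [dif_pos hex]; exact hex.choose_spec
    have hprime := (h _ (List.get_mem L i)).1
    have hy := (h _ (List.get_mem L i)).2.2
    have hsub : (t - g i) * (L.get i).2.1 ∈ (L.get i).2.2 := by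
      have := Ideal.sub_mem _ hct hgi
      convert this using 1; ring
    have htg : t - g i ∈ (L.get i).2.2 :=
      (hprime.mem_or_mem hsub).resolve_right hy
    refine Set.mem_biUnion (Finset.mem_univ i) ?_
    rw [Set.mem_vadd_set_iff_neg_vadd_mem]
    show -g i + t ∈ (L.get i).2.2
    convert htg using 1; ring
  obtain ⟨i, _, hfi⟩ := AddSubgroup.exists_finiteIndex_of_leftCoset_cover hcovers
  have hfin := finite_quot_of_finiteIndex _ hfi
  have hinf := (h _ (List.get_mem L i)).2.1
  exact absurd hfin (@not_finite _ hinf)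

lemma mem_mul_rep {R : Type} [CommRing R] {I J : Ideal R} {x : R} (h : x ∈ I * J) :
    ∃ L : List (R × R), (∀ q ∈ L, q.1 ∈ I ∧ q.2 ∈ J) ∧ (L.map fun q => q.1 * q.2).sum = x := by
  refine Submodule.mul_induction_on h ?_ ?_
  · intro m hm n hn
    exact ⟨[(m, n)], by simp [hm, hn]⟩
  · rintro u v ⟨L1, hL1, hs1⟩ ⟨L2, hL2, hs2⟩
    refine ⟨L1 ++ L2, ?_, by simp [hs1, hs2]⟩
    intro q hq
    rcases List.mem_append.mp hq with h | h
    exacts [hL1 q h, hL2 q h]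

lemma sum_range_getD {R : Type} [CommRing R] (L : List (R × R)) (n : ℕ) :
    ∑ i ∈ Finset.range n, ((L.getD i (0,0)).1 * (L.getD i (0,0)).2)
      = ((L.take n).map fun q => q.1 * q.2).sum := by
  induction L generalizing n with
  | nil => simp
  | cons q L IH =>
    cases n with
    | zero => simp
    | succ n =>
      rw [Finset.sum_range_succ']
      simp only [List.getD_cons_succ, List.getD_cons_zero, List.take_succ_cons,
        List.map_cons, List.sum_cons, IH]
      ring

lemma build {R : Type} [CommRing R] (P : Finset (Ideal R)) (𝔞 : Ideal R)
    (hP : ∀ p ∈ P, p.IsPrime ∧ Infinite (R ⧸ p))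
    (y z : R) (hy𝔞 : y ∈ 𝔞) (hyp : ∀ p ∈ P, y ∉ p) (hz𝔞 : z ∈ 𝔞) (hzp : ∀ p ∈ P, z ∉ p)
    (L : List (R × R))
    (hL : ∀ q ∈ L, (q.1 ∈ 𝔞 ∧ ∀ p ∈ P, q.1 ∉ p) ∧ (q.2 ∈ 𝔞 ∧ ∀ p ∈ P, q.2 ∉ p))
    (s : R) :
    ∃ (L' : List (R × R)) (w : R),
      (∀ q ∈ L', (q.1 ∈ 𝔞 ∧ ∀ p ∈ P, q.1 ∉ p) ∧ (q.2 ∈ 𝔞 ∧ ∀ p ∈ P, q.2 ∉ p)) ∧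
      w ∈ 𝔞 ∧
      ((L'.map fun q => q.1 * q.2).sum = (L.map fun q => q.1 * q.2).sum + z * w) ∧
      (∀ n, 0 < n → n ≤ L'.length → ∀ p ∈ P,
        s + (((L'.take n).map fun q => q.1 * q.2).sum) ∉ p) := by
  induction L generalizing s with
  | nil =>
    refine ⟨[], 0, by simp, 𝔞.zero_mem, by simp, ?_⟩
    intro n hn hn' p hp
    simp at hn'
    omega
  | cons q L IH =>
    -- choose w₁ = t * y avoiding the required cosets
    have hzy : ∀ p ∈ P, z * y ∉ p := by
      intro p hp hmem
      rcases (hP p hp).1.mem_or_mem hmem with h | h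
      exacts [hzp p hp h, hyp p hp h]
    set C : List (R × R × Ideal R) :=
      (P.toList.map fun p => ((0 : R), y, p)) ++
      (P.toList.map fun p => (s, z * y, p)) ++
      (P.toList.map fun p => (s + q.1 * q.2, z * y, p)) with hC
    have hCcond : ∀ c ∈ C, (c.2.2).IsPrime ∧ Infinite (R ⧸ c.2.2) ∧ c.2.1 ∉ c.2.2 := by
      intro c hc
      simp only [hC, List.mem_append, List.mem_map] at hc
      rcases hc with (⟨p, hp, rfl⟩ | ⟨p, hp, rfl⟩) | ⟨p, hp, rfl⟩ <;>
        rw [Finset.mem_toList] at hp <;>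
        exact ⟨(hP p hp).1, (hP p hp).2, by first | exact hyp p hp | exact hzy p hp⟩
    obtain ⟨t, ht⟩ := coset_avoidance C hCcond
    have ht0 : ∀ p ∈ P, t * y ∉ p := by
      intro p hp
      have := ht (0, y, p) (by simp [hC, Finset.mem_toList, hp])
      simpa using this
    have ht1 : ∀ p ∈ P, s + z * (t * y) ∉ p := by
      intro p hp
      have := ht (s, z * y, p) (by simp [hC, Finset.mem_toList, hp])
      simpa [mul_assoc, mul_comm, mul_left_comm] using this
    have ht2 : ∀ p ∈ P, s + z * (t * y) + q.1 * q.2 ∉ p := by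
      intro p hp
      have := ht (s + q.1 * q.2, z * y, p) (by simp [hC, Finset.mem_toList, hp])
      have h' : s + q.1 * q.2 + t * (z * y) = s + z * (t * y) + q.1 * q.2 := by ring
      rwa [h'] at this
    obtain ⟨L'', w'', hL''good, hw''𝔞, hL''sum, hL''pre⟩ :=
      IH (fun q hq => hL q (List.mem_cons_of_mem _ hq)) (s + z * (t * y) + q.1 * q.2)
    refine ⟨(z, t * y) :: q :: L'', t * y + w'', ?_, ?_, ?_, ?_⟩
    · intro q' hq'
      rcases List.mem_cons.mp hq' with rfl | hq'
      · exact ⟨⟨hz𝔞, hzp⟩, ⟨Ideal.mul_mem_left _ t hy𝔞, ht0⟩⟩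
      rcases List.mem_cons.mp hq' with rfl | hq'
      · exact hL q' (List.mem_cons_self)
      · exact hL''good q' hq'
    · exact 𝔞.add_mem (Ideal.mul_mem_left _ t hy𝔞) hw''𝔞
    · simp only [List.map_cons, List.sum_cons, hL''sum]
      ring
    · intro n hn hn' p hp
      match n, hn with
      | 1, _ =>
        simpa using ht1 p hp
      | 2, _ =>
        have := ht2 p hp
        simp only [List.take_succ_cons, List.take_zero, List.map_cons, List.map_nil,
          List.sum_cons, List.sum_nil, add_zero]
        convert this using 2
        ring
      | (m+3), _ =>
        have hm : 0 < m + 1 := Nat.succ_pos m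
        have hm' : m + 1 ≤ L''.length := by
          simp only [List.length_cons] at hn'
          omega
        have := hL''pre (m+1) hm hm' p hp
        simp only [List.take_succ_cons, List.map_cons, List.sum_cons] at *
        convert this using 2
        ring

lemma trans_sum {R : Type} [CommRing R] (z : R) (L : List (R × R)) :
    (((L.flatMap fun q => [(q.1+z, q.2+z), (-z, q.1+z), (q.2+z, -z), (z,z)]).map
      fun q => q.1 * q.2).sum) = (L.map fun q => q.1 * q.2).sum := by
  induction L with
  | nil => simp
  | cons q L IH =>
    simp only [List.flatMap_cons, List.map_append, List.sum_append, IH, List.map_cons,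
      List.sum_cons, List.map_nil, List.sum_nil]
    ring

/-- **Corollary 2.2.** If `x ∈ 𝔞²` is an `𝔞`-filter regular element of `M` over a Noetherian
local ring, then `x = a₁b₁ + ⋯ + aᵣbᵣ` where all `aᵢ, bᵢ ∈ 𝔞` are `𝔞`-filter regular elements
of `M` and all partial sums `a₁b₁ + ⋯ + aᵢbᵢ` are `𝔞`-filter regular elements of `M`. -/
theorem exists_sum_products_filter_regular
    {R : Type} [CommRing R] [IsNoetherianRing R] [IsLocalRing R]
    (𝔞 : Ideal R) (M : Type) [AddCommGroup M] [Module R M] [Module.Finite R M]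
    (x : R) (hx : x ∈ 𝔞 ^ 2)
    (hfr : ∀ p ∈ associatedPrimes R M, ¬ 𝔞 ≤ p → x ∉ p) :
    ∃ (r : ℕ) (a b : ℕ → R), 0 < r ∧
      (∀ i < r, a i ∈ 𝔞) ∧ (∀ i < r, b i ∈ 𝔞) ∧
      (∀ i < r, ∀ p ∈ associatedPrimes R M, ¬ 𝔞 ≤ p → a i ∉ p) ∧
      (∀ i < r, ∀ p ∈ associatedPrimes R M, ¬ 𝔞 ≤ p → b i ∉ p) ∧
      x = ∑ i ∈ Finset.range r, a i * b i ∧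
      (∀ i < r, ∀ p ∈ associatedPrimes R M, ¬ 𝔞 ≤ p →
        (∑ k ∈ Finset.range (i + 1), a k * b k) ∉ p) := by
  classical
  by_cases htop : 𝔞 = ⊤
  · subst htop
    refine ⟨1, fun _ => x, fun _ => 1, one_pos, by simp, by simp, ?_, ?_, by simp, ?_⟩
    · intro i _ p hp hple
      exact hfr p hp hple
    · intro i _ p hp _
      exact fun h => hp.isPrime.ne_top (Ideal.eq_top_of_isUnit_mem p h isUnit_one)
    · intro i hi p hp hple
      interval_cases i
      simpa using hfr p hp hple
  have hfin := associatedPrimes_finite R M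
  set P : Finset (Ideal R) := hfin.toFinset.filter (fun p => ¬ 𝔞 ≤ p) with hPdef
  have hPmem : ∀ p, p ∈ P ↔ (p ∈ associatedPrimes R M ∧ ¬ 𝔞 ≤ p) := by
    intro p
    simp [hPdef, Set.Finite.mem_toFinset]
  have hPprime : ∀ p ∈ P, p.IsPrime := fun p hp => ((hPmem p).mp hp).1.isPrime
  have hPinf : ∀ p ∈ P, Infinite (R ⧸ p) := by
    intro p hp
    apply quot_infinite_of_ne_maximal p (hPprime p hp)
    intro hmax
    exact ((hPmem p).mp hp).2
      ((IsLocalRing.eq_maximalIdeal hmax) ▸ IsLocalRing.le_maximalIdeal htop)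
  have hP : ∀ p ∈ P, p.IsPrime ∧ Infinite (R ⧸ p) := fun p hp => ⟨hPprime p hp, hPinf p hp⟩
  have hxP : ∀ p ∈ P, x ∉ p := fun p hp =>
    hfr p ((hPmem p).mp hp).1 ((hPmem p).mp hp).2
  obtain ⟨L₀, hL₀mem, hL₀sum⟩ := mem_mul_rep (show x ∈ 𝔞 * 𝔞 by rwa [← sq])
  suffices hS : ∃ L : List (R × R), L ≠ [] ∧
      (∀ q ∈ L, (q.1 ∈ 𝔞 ∧ ∀ p ∈ P, q.1 ∉ p) ∧ (q.2 ∈ 𝔞 ∧ ∀ p ∈ P, q.2 ∉ p)) ∧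
      (L.map fun q => q.1 * q.2).sum = x ∧
      (∀ n, 0 < n → n ≤ L.length → ∀ p ∈ P,
        ((L.take n).map fun q => q.1 * q.2).sum ∉ p) by
    obtain ⟨L, hne, hgood, hsum, hpre⟩ := hS
    have hget : ∀ i, i < L.length → L.getD i (0,0) ∈ L := by
      intro i hi
      simp only [List.getD_eq_getElem?_getD, List.getElem?_eq_getElem hi, Option.getD_some]
      exact List.getElem_mem hi
    refine ⟨L.length, fun i => (L.getD i (0,0)).1, fun i => (L.getD i (0,0)).2,
      List.length_pos_iff.mpr hne,
      fun i hi => (hgood _ (hget i hi)).1.1,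
      fun i hi => (hgood _ (hget i hi)).2.1,
      fun i hi p hp hple => (hgood _ (hget i hi)).1.2 p ((hPmem p).mpr ⟨hp, hple⟩),
      fun i hi p hp hple => (hgood _ (hget i hi)).2.2 p ((hPmem p).mpr ⟨hp, hple⟩),
      ?_, ?_⟩
    · rw [sum_range_getD, List.take_length, hsum]
    · intro i hi p hp hple
      rw [sum_range_getD]
      exact hpre (i+1) (Nat.succ_pos i) (by omega) p ((hPmem p).mpr ⟨hp, hple⟩)
  by_cases hPe : P = ∅
  · refine ⟨L₀ ++ [(0,0)], by simp, ?_, by simp [hL₀sum], ?_⟩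
    · intro q hq
      rcases List.mem_append.mp hq with h | h
      · exact ⟨⟨(hL₀mem q h).1, by simp [hPe]⟩, ⟨(hL₀mem q h).2, by simp [hPe]⟩⟩
      · simp at h
        subst h
        exact ⟨⟨𝔞.zero_mem, by simp [hPe]⟩, ⟨𝔞.zero_mem, by simp [hPe]⟩⟩
    · intro n _ _ p hp
      simp [hPe] at hp
  -- P nonempty: get y ∈ 𝔞 avoiding all p ∈ P
  have hns : ¬ ((𝔞 : Set R) ⊆ ⋃ p ∈ (↑P : Set (Ideal R)), (id p : Ideal R)) := by
    intro hsub
    obtain ⟨p, hp, hle⟩ :=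
      (Ideal.subset_union_prime (s := P) (f := id) ⊥ ⊥
        (fun p hp _ _ => hPprime p hp)).mp hsub
    exact ((hPmem p).mp hp).2 hle
  obtain ⟨y, hy𝔞, hyU⟩ := Set.not_subset.mp hns
  have hyP : ∀ p ∈ P, y ∉ p := by
    intro p hp hyp
    exact hyU (Set.mem_biUnion hp hyp)
  -- choose z = t₀ * y such that z and all (q.1 + z), (q.2 + z) avoid P
  have hzyP : ∀ p ∈ P, ∀ c : R, (c, y, p).2.2.IsPrime ∧ Infinite (R ⧸ p) ∧ y ∉ p :=
    fun p hp c => ⟨hPprime p hp, hPinf p hp, hyP p hp⟩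
  set C₀ : List (R × R × Ideal R) :=
    (P.toList.map fun p => ((0 : R), y, p)) ++
    (L₀.flatMap fun q => P.toList.flatMap fun p => [(q.1, y, p), (q.2, y, p)]) with hC₀
  have hC₀cond : ∀ c ∈ C₀, (c.2.2).IsPrime ∧ Infinite (R ⧸ c.2.2) ∧ c.2.1 ∉ c.2.2 := by
    intro c hc
    simp only [hC₀, List.mem_append, List.mem_map, List.mem_flatMap, List.mem_cons,
      List.mem_singleton, List.not_mem_nil, or_false] at hc
    rcases hc with ⟨p, hp, rfl⟩ | ⟨q, hq, p, hp, (rfl | rfl)⟩ <;>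
      rw [Finset.mem_toList] at hp <;>
      exact ⟨hPprime p hp, hPinf p hp, hyP p hp⟩
  obtain ⟨t₀, ht₀⟩ := coset_avoidance C₀ hC₀cond
  set z : R := t₀ * y with hzdef
  have hz𝔞 : z ∈ 𝔞 := Ideal.mul_mem_left _ t₀ hy𝔞
  have hzP : ∀ p ∈ P, z ∉ p := by
    intro p hp
    have := ht₀ ((0 : R), y, p) (by simp [hC₀, Finset.mem_toList, hp])
    simpa [hzdef] using this
  have hcz : ∀ q ∈ L₀, ∀ p ∈ P, q.1 + z ∉ p ∧ q.2 + z ∉ p := by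
    intro q hq p hp
    constructor
    · have := ht₀ (q.1, y, p)
        (by simp only [hC₀, List.mem_append, List.mem_flatMap, List.mem_cons]
            exact Or.inr ⟨q, hq, p, by simp [Finset.mem_toList, hp]⟩)
      simpa [hzdef] using this
    · have := ht₀ (q.2, y, p)
        (by simp only [hC₀, List.mem_append, List.mem_flatMap, List.mem_cons]
            exact Or.inr ⟨q, hq, p, by simp [Finset.mem_toList, hp]⟩)
      simpa [hzdef] using this
  -- transformed list of "good" pairs
  set T : List (R × R) :=
    L₀.flatMap fun q => [(q.1+z, q.2+z), (-z, q.1+z), (q.2+z, -z), (z,z)] with hT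
  have hTgood : ∀ q ∈ T, (q.1 ∈ 𝔞 ∧ ∀ p ∈ P, q.1 ∉ p) ∧ (q.2 ∈ 𝔞 ∧ ∀ p ∈ P, q.2 ∉ p) := by
    intro q' hq'
    simp only [hT, List.mem_flatMap, List.mem_cons, List.mem_singleton,
      List.not_mem_nil, or_false] at hq'
    obtain ⟨q, hq, hcase⟩ := hq'
    have h1 : q.1 + z ∈ 𝔞 := 𝔞.add_mem (hL₀mem q hq).1 hz𝔞
    have h2 : q.2 + z ∈ 𝔞 := 𝔞.add_mem (hL₀mem q hq).2 hz𝔞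
    have h1P : ∀ p ∈ P, q.1 + z ∉ p := fun p hp => (hcz q hq p hp).1
    have h2P : ∀ p ∈ P, q.2 + z ∉ p := fun p hp => (hcz q hq p hp).2
    have hnz : -z ∈ 𝔞 := 𝔞.neg_mem hz𝔞
    have hnzP : ∀ p ∈ P, -z ∉ p := fun p hp h => hzP p hp ((Submodule.neg_mem_iff p).mp h)
    rcases hcase with rfl | rfl | rfl | rfl
    · exact ⟨⟨h1, h1P⟩, ⟨h2, h2P⟩⟩
    · exact ⟨⟨hnz, hnzP⟩, ⟨h1, h1P⟩⟩
    · exact ⟨⟨h2, h2P⟩, ⟨hnz, hnzP⟩⟩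
    · exact ⟨⟨hz𝔞, hzP⟩, ⟨hz𝔞, hzP⟩⟩
  have hTsum : (T.map fun q => q.1 * q.2).sum = x := by
    rw [hT, trans_sum, hL₀sum]
  obtain ⟨L', w, hL'good, hw𝔞, hL'sum, hL'pre⟩ :=
    build P 𝔞 hP y z hy𝔞 hyP hz𝔞 hzP T hTgood 0
  rw [hTsum] at hL'sum
  -- final correction w' = t₁ * y
  set C₁ : List (R × R × Ideal R) :=
    P.toList.flatMap fun p => [((0 : R), y, p), (x + z*w, z*y, p), (w, y, p)] with hC₁
  have hzy : ∀ p ∈ P, z * y ∉ p := by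
    intro p hp hmem
    rcases (hPprime p hp).mem_or_mem hmem with h | h
    exacts [hzP p hp h, hyP p hp h]
  have hC₁cond : ∀ c ∈ C₁, (c.2.2).IsPrime ∧ Infinite (R ⧸ c.2.2) ∧ c.2.1 ∉ c.2.2 := by
    intro c hc
    simp only [hC₁, List.mem_flatMap, List.mem_cons, List.mem_singleton,
      List.not_mem_nil, or_false] at hc
    obtain ⟨p, hp, hcase⟩ := hc
    rw [Finset.mem_toList] at hp
    rcases hcase with rfl | rfl | rfl
    · exact ⟨hPprime p hp, hPinf p hp, hyP p hp⟩
    · exact ⟨hPprime p hp, hPinf p hp, hzy p hp⟩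
    · exact ⟨hPprime p hp, hPinf p hp, hyP p hp⟩
  obtain ⟨t₁, ht₁⟩ := coset_avoidance C₁ hC₁cond
  set w' : R := t₁ * y with hw'def
  have hw'𝔞 : w' ∈ 𝔞 := Ideal.mul_mem_left _ t₁ hy𝔞
  have hw'P : ∀ p ∈ P, w' ∉ p := by
    intro p hp
    have := ht₁ ((0 : R), y, p)
      (List.mem_flatMap.mpr ⟨p, Finset.mem_toList.mpr hp, by simp⟩)
    simpa [hw'def] using this
  have hfinpre : ∀ p ∈ P, x + z*w + z*w' ∉ p := by
    intro p hp
    have := ht₁ (x + z*w, z*y, p)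
      (List.mem_flatMap.mpr ⟨p, Finset.mem_toList.mpr hp, by simp⟩)
    have heq : x + z*w + t₁ * (z*y) = x + z*w + z*w' := by rw [hw'def]; ring
    rwa [heq] at this
  have hww' : ∀ p ∈ P, w + w' ∉ p := by
    intro p hp
    have := ht₁ (w, y, p)
      (List.mem_flatMap.mpr ⟨p, Finset.mem_toList.mpr hp, by simp⟩)
    exact this
  refine ⟨L' ++ [(z, w'), (z, -(w + w'))], by simp, ?_, ?_, ?_⟩
  · intro q hq
    rcases List.mem_append.mp hq with h | h
    · exact hL'good q h
    · have hnww : -(w + w') ∈ 𝔞 := 𝔞.neg_mem (𝔞.add_mem hw𝔞 hw'𝔞)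
      have hnwwP : ∀ p ∈ P, -(w + w') ∉ p :=
        fun p hp hmem => hww' p hp ((Submodule.neg_mem_iff p).mp hmem)
      rcases List.mem_cons.mp h with rfl | h
      · exact ⟨⟨hz𝔞, hzP⟩, ⟨hw'𝔞, hw'P⟩⟩
      · rw [List.mem_singleton.mp h]
        exact ⟨⟨hz𝔞, hzP⟩, ⟨hnww, hnwwP⟩⟩
  · simp only [List.map_append, List.sum_append, hL'sum, List.map_cons, List.map_nil,
      List.sum_cons, List.sum_nil]
    ring
  · intro n hn hn' p hp
    simp only [List.length_append, List.length_cons, List.length_nil] at hn'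
    rw [List.take_append]
    rcases show n ≤ L'.length ∨ n = L'.length + 1 ∨ n = L'.length + 2 by omega with
      h | h | h
    · have h0 : n - L'.length = 0 := by omega
      rw [h0]
      simp only [List.take_zero, List.append_nil]
      have := hL'pre n hn h p hp
      rwa [zero_add] at this
    · have h1 : n - L'.length = 1 := by omega
      have h2 : L'.take n = L' := List.take_of_length_le (by omega)
      rw [h1, h2]
      simp only [List.take_succ_cons, List.take_zero, List.map_append, List.sum_append,
        hL'sum, List.map_cons, List.map_nil, List.sum_cons, List.sum_nil, add_zero]
      exact hfinpre p hp
    · have h1 : n - L'.length = 2 := by omega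
      have h2 : L'.take n = L' := List.take_of_length_le (by omega)
      rw [h1, h2]
      simp only [List.take_succ_cons, List.take_zero, List.map_append, List.map_cons,
        List.map_nil, List.sum_append, List.sum_cons, List.sum_nil, hL'sum]
      convert hxP p hp using 2
      ring
end
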